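/- Let f : ℤ → ℝ be a function and let a ∈ ℤ. Let μ > 0 be non-integer with m − 1 < μ < m, where m = ⌈μ⌉. Then for all t ∈ ℤ with t ≥ a + m: | f(t) − Σ_{k=0}^{m−1} ((t−a)^{↑k}/k!) · ∇^k f(a) | ≤ ((t−a)^{↑μ}/Γ(μ+1)) · max_{τ ∈ {a+1,...,t}} |∇_{(a+1)*}^{μ} f(τ)|. -/

import Mathlib

open Finset

/-- Backward (nabla) difference: `∇f(t) = f(t) - f(t-1)`. -/
def nabla (f : ℤ → ℝ) : ℤ → ℝ := fun t => f t - f (t - 1)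

/-- Rising factorial `t^{↑α} = Γ(t+α)/Γ(t)`. -/
noncomputable def risingFac (t α : ℝ) : ℝ := Real.Gamma (t + α) / Real.Gamma t

/-- The `ν`-th order nabla fractional sum `∇_a^{-ν} f (t) = Σ_{s=a}^{t} (t-s+1)^{↑(ν-1)}/Γ(ν) · f(s)`. -/
noncomputable def fracSum (ν : ℝ) (a : ℤ) (f : ℤ → ℝ) : ℤ → ℝ := fun t =>
  ∑ s ∈ Finset.Icc a t, risingFac ((t - s + 1 : ℤ) : ℝ) (ν - 1) / Real.Gamma ν * f s

/-- Caputo-like nabla fractional difference `∇_{a*}^{μ} f = ∇_a^{-(m-μ)} (∇^m f)`, `m = ⌈μ⌉`. -/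
noncomputable def caputoNabla (μ : ℝ) (a : ℤ) (f : ℤ → ℝ) : ℤ → ℝ :=
  fracSum ((⌈μ⌉₊ : ℝ) - μ) a (nabla^[⌈μ⌉₊] f)

namespace TaylorAux

/-- `P n ν = ν (ν+1) ⋯ (ν+n-1) / n!`, the generalized binomial `C(ν+n-1, n)`. -/
noncomputable def P (n : ℕ) (ν : ℝ) : ℝ := (∏ j ∈ range n, (ν + j)) / (n.factorial : ℝ)

lemma P_zero (ν : ℝ) : P 0 ν = 1 := by simp [P]

lemma P_one (n : ℕ) : P n 1 = 1 := by
  have h : (∏ j ∈ range n, ((1:ℝ) + j)) = (n.factorial : ℝ) := by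
    rw [← Finset.prod_range_add_one_eq_factorial n]
    push_cast
    apply Finset.prod_congr rfl
    intro j _
    ring
  simp [P, h]
  exact Nat.factorial_ne_zero n

lemma P_nonneg (n : ℕ) {ν : ℝ} (hν : 0 < ν) : 0 ≤ P n ν := by
  apply div_nonneg _ (by positivity)
  apply Finset.prod_nonneg
  intro j _
  positivity

lemma absorb (n : ℕ) (ν : ℝ) : ((n:ℝ)+1) * P (n+1) ν = (ν + n) * P n ν := by
  have hf : ((n+1).factorial : ℝ) = ((n:ℝ)+1) * (n.factorial : ℝ) := by
    rw [Nat.factorial_succ]; push_cast; ring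
  have h0 : (n.factorial : ℝ) ≠ 0 := by positivity
  rw [P, P, prod_range_succ, hf]
  field_simp

lemma pascal (n : ℕ) (ν : ℝ) : P (n+1) (ν+1) = P n (ν+1) + P (n+1) ν := by
  have hshift : (∏ j ∈ range (n+1), (ν + j)) = ν * ∏ j ∈ range n, ((ν+1) + j) := by
    rw [prod_range_succ']
    simp only [Nat.cast_zero, add_zero]
    rw [mul_comm]
    congr 1
    apply Finset.prod_congr rfl
    intro j _
    push_cast; ring
  have hf : ((n+1).factorial : ℝ) = ((n:ℝ)+1) * (n.factorial : ℝ) := by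
    rw [Nat.factorial_succ]; push_cast; ring
  have h0 : (n.factorial : ℝ) ≠ 0 := by positivity
  have h1 : ((n:ℝ)+1) ≠ 0 := by positivity
  rw [P, P, P, prod_range_succ, hshift, hf]
  field_simp
  ring

lemma hockey (n : ℕ) (ν : ℝ) : ∑ i ∈ range (n+1), P i ν = P n (ν+1) := by
  induction n with
  | zero => simp [P_zero]
  | succ n ih => rw [sum_range_succ, ih, pascal]

lemma vandermonde (N : ℕ) (ν σ : ℝ) :
    ∑ i ∈ range (N+1), P (N-i) ν * P i σ = P N (ν+σ) := by
  induction N with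
  | zero => simp [P_zero]
  | succ N ih =>
    have key : ((N:ℝ)+1) * ∑ i ∈ range (N+1+1), P (N+1-i) ν * P i σ
        = ((N:ℝ)+1) * P (N+1) (ν+σ) := by
      have expand : ((N:ℝ)+1) * ∑ i ∈ range (N+1+1), P (N+1-i) ν * P i σ
          = (∑ i ∈ range (N+1+1), ((N:ℝ)+1-i) * P (N+1-i) ν * P i σ)
            + ∑ i ∈ range (N+1+1), (i:ℝ) * P (N+1-i) ν * P i σ := by
        rw [mul_sum, ← sum_add_distrib]
        apply sum_congr rfl
        intro i hi
        ring
      have first : (∑ i ∈ range (N+1+1), ((N:ℝ)+1-i) * P (N+1-i) ν * P i σ)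
          = ∑ i ∈ range (N+1), (ν + ((N:ℝ)-i)) * (P (N-i) ν * P i σ) := by
        rw [sum_range_succ]
        have hz : ((N:ℝ)+1-((N+1:ℕ):ℝ)) * P (N+1-(N+1)) ν * P (N+1) σ = 0 := by
          push_cast; ring
        rw [hz, add_zero]
        apply sum_congr rfl
        intro i hi
        have hiN : i ≤ N := by simpa [Nat.lt_succ_iff] using hi
        have h3 : ((N-i:ℕ):ℝ) = (N:ℝ)-(i:ℝ) := Nat.cast_sub hiN
        have h2 : N+1-i = (N-i)+1 := by omega
        have habs := absorb (N-i) ν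
        rw [h3] at habs
        rw [h2]
        linear_combination (P i σ) * habs
      have second : (∑ i ∈ range (N+1+1), (i:ℝ) * P (N+1-i) ν * P i σ)
          = ∑ i ∈ range (N+1), (σ + (i:ℝ)) * (P (N-i) ν * P i σ) := by
        rw [Finset.sum_range_succ']
        simp only [Nat.cast_zero, zero_mul, add_zero, Nat.succ_sub_succ]
        apply sum_congr rfl
        intro i hi
        push_cast
        linear_combination (P (N-i) ν) * absorb i σ
      rw [expand, first, second, ← sum_add_distrib, absorb]
      have hcomb : ∑ i ∈ range (N+1), ((ν + ((N:ℝ)-i)) * (P (N-i) ν * P i σ)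
          + (σ + (i:ℝ)) * (P (N-i) ν * P i σ))
          = (ν + σ + N) * ∑ i ∈ range (N+1), P (N-i) ν * P i σ := by
        rw [mul_sum]
        apply sum_congr rfl
        intro i hi
        ring
      rw [hcomb, ih]
    have hne : ((N:ℝ)+1) ≠ 0 := by positivity
    exact mul_left_cancel₀ hne key

/-- reindex an integer `Icc` sum to a `range` sum -/
lemma sum_Icc_int (r t : ℤ) (h : r ≤ t) (F : ℤ → ℝ) :
    ∑ s ∈ Icc r t, F s = ∑ i ∈ range ((t-r).toNat + 1), F (r + i) := by
  apply Finset.sum_nbij' (fun s => (s - r).toNat) (fun i => r + i)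
  · intro s hs
    simp only [mem_Icc] at hs
    simp only [mem_range]
    omega
  · intro i hi
    simp only [mem_range] at hi
    simp only [mem_Icc]
    omega
  · intro s hs
    simp only [mem_Icc] at hs
    omega
  · intro i hi
    simp only [mem_range] at hi
    omega
  · intro s hs
    simp only [mem_Icc] at hs
    congr 1
    omega

/-- discrete convolution of the kernels (composition law, in `P` form) -/
lemma convP (A t : ℤ) (ν σ : ℝ) (g : ℤ → ℝ) :
    ∑ s ∈ Icc A t, P (t-s).toNat ν * ∑ r ∈ Icc A s, P (s-r).toNat σ * g r
      = ∑ r ∈ Icc A t, P (t-r).toNat (ν+σ) * g r := by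
  have swap : ∑ s ∈ Icc A t, ∑ r ∈ Icc A s, P (t-s).toNat ν * (P (s-r).toNat σ * g r)
      = ∑ r ∈ Icc A t, ∑ s ∈ Icc r t, P (t-s).toNat ν * (P (s-r).toNat σ * g r) := by
    apply Finset.sum_comm'
    intro s r
    simp only [mem_Icc]
    omega
  calc ∑ s ∈ Icc A t, P (t-s).toNat ν * ∑ r ∈ Icc A s, P (s-r).toNat σ * g r
      = ∑ s ∈ Icc A t, ∑ r ∈ Icc A s, P (t-s).toNat ν * (P (s-r).toNat σ * g r) := by
        apply sum_congr rfl; intro s _; rw [mul_sum]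
    _ = ∑ r ∈ Icc A t, ∑ s ∈ Icc r t, P (t-s).toNat ν * (P (s-r).toNat σ * g r) := swap
    _ = ∑ r ∈ Icc A t, P (t-r).toNat (ν+σ) * g r := by
        apply sum_congr rfl
        intro r hr
        simp only [mem_Icc] at hr
        rw [sum_Icc_int r t hr.2]
        have : ∀ i ∈ range ((t-r).toNat + 1),
            P (t-(r+i)).toNat ν * (P ((r+i)-r).toNat σ * g r)
            = (P ((t-r).toNat - i) ν * P i σ) * g r := by
          intro i hi
          simp only [mem_range] at hi
          have h1 : (t-(r+i)).toNat = (t-r).toNat - i := by omega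
          have h2 : ((r+i)-r).toNat = i := by omega
          rw [h1, h2]; ring
        rw [sum_congr rfl this, ← sum_mul, vandermonde]

/-- total mass of the kernel -/
lemma sum_P_Icc (A t : ℤ) (h : A ≤ t) (ν : ℝ) :
    ∑ s ∈ Icc A t, P (t-s).toNat ν = P (t-A).toNat (ν+1) := by
  rw [sum_Icc_int A t h]
  have : ∀ i ∈ range ((t-A).toNat + 1),
      P (t-(A+i)).toNat ν = P ((t-A).toNat - i) ν := by
    intro i hi
    simp only [mem_range] at hi
    congr 1
    omega
  rw [sum_congr rfl this]
  rw [show ∑ i ∈ range ((t-A).toNat + 1), P ((t-A).toNat - i) ν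
      = ∑ i ∈ range ((t-A).toNat + 1), P i ν from by
    rw [← Finset.sum_range_reflect]
    apply sum_congr rfl
    intro i hi
    simp only [mem_range] at hi
    congr 1
    omega]
  exact hockey _ ν

/-- telescoping sum of nabla -/
lemma telescope (a : ℤ) (f : ℤ → ℝ) : ∀ t : ℤ, a ≤ t →
    ∑ s ∈ Icc (a+1) t, (f s - f (s-1)) = f t - f a := by
  refine Int.le_induction ?_ ?_
  · simp [show Icc (a+1) a = ∅ from by rw [Finset.Icc_eq_empty]; omega]
  · intro t ht ih
    have hins : Icc (a+1) (t+1) = insert (t+1) (Icc (a+1) t) := by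
      ext x; simp only [mem_Icc, mem_insert]; omega
    rw [hins, Finset.sum_insert (by simp only [mem_Icc]; omega), ih]
    simp

/-- the discrete Taylor formula of integer order, in `P` form -/
lemma taylorP (f : ℤ → ℝ) (a : ℤ) : ∀ m : ℕ, 1 ≤ m → ∀ t : ℤ, a + 1 ≤ t →
    ∑ s ∈ Icc (a+1) t, P (t-s).toNat (m:ℝ) * (nabla^[m] f) s
      = f t - ∑ k ∈ range m, P (t-(a+1)).toNat ((k:ℝ)+1) * (nabla^[k] f) a := by
  refine Nat.le_induction ?_ ?_
  · intro t ht
    have h1 : ∑ s ∈ Icc (a+1) t, P (t-s).toNat ((1:ℕ):ℝ) * (nabla^[1] f) s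
        = ∑ s ∈ Icc (a+1) t, (f s - f (s-1)) := by
      apply sum_congr rfl
      intro s _
      simp only [Nat.cast_one, P_one, one_mul, Function.iterate_one, nabla]
    rw [h1, telescope a f t (by omega)]
    simp [P_one, nabla]
  · intro m hm ih t ht
    have hGstep : ∀ s : ℤ, (nabla^[m+1] f) s = (nabla^[m] f) s - (nabla^[m] f) (s-1) := by
      intro s
      rw [Function.iterate_succ_apply' nabla m f]
      rfl
    have hcast : ((m+1:ℕ):ℝ) = (m:ℝ) + 1 := by push_cast; ring
    have step1 : ∑ s ∈ Icc (a+1) t, P (t-s).toNat ((m+1:ℕ):ℝ) * (nabla^[m+1] f) s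
        = ∑ s ∈ Icc (a+1) t, P (t-s).toNat (m:ℝ) *
            ∑ r ∈ Icc (a+1) s, P (s-r).toNat 1 * (nabla^[m+1] f) r := by
      rw [convP]
      apply sum_congr rfl
      intro s _
      rw [hcast]
    have step2 : ∀ s ∈ Icc (a+1) t,
        (∑ r ∈ Icc (a+1) s, P (s-r).toNat 1 * (nabla^[m+1] f) r)
          = (nabla^[m] f) s - (nabla^[m] f) a := by
      intro s hs
      simp only [mem_Icc] at hs
      have : ∑ r ∈ Icc (a+1) s, P (s-r).toNat 1 * (nabla^[m+1] f) r
          = ∑ r ∈ Icc (a+1) s, ((nabla^[m] f) r - (nabla^[m] f) (r-1)) := by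
        apply sum_congr rfl
        intro r _
        rw [P_one, one_mul, hGstep]
      rw [this, telescope a (nabla^[m] f) s (by omega)]
    have step3 : ∑ s ∈ Icc (a+1) t, P (t-s).toNat (m:ℝ) *
            ((nabla^[m] f) s - (nabla^[m] f) a)
        = (∑ s ∈ Icc (a+1) t, P (t-s).toNat (m:ℝ) * (nabla^[m] f) s)
          - (∑ s ∈ Icc (a+1) t, P (t-s).toNat (m:ℝ)) * (nabla^[m] f) a := by
      rw [sum_mul, ← sum_sub_distrib]
      apply sum_congr rfl
      intro s _
      ring
    rw [step1, sum_congr rfl (fun s hs => by rw [step2 s hs]), step3,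
        ih t ht, sum_P_Icc (a+1) t (by omega), sum_range_succ]
    ring

lemma Gamma_prod (ν : ℝ) (hj : ∀ j : ℕ, ν + (j:ℝ) ≠ 0) (n : ℕ) :
    Real.Gamma (ν + n) = (∏ j ∈ range n, (ν + (j:ℝ))) * Real.Gamma ν := by
  induction n with
  | zero => simp
  | succ n ih =>
    have h1 : ν + ((n+1:ℕ):ℝ) = (ν + (n:ℕ)) + 1 := by push_cast; ring
    rw [h1, Real.Gamma_add_one (hj n), ih, prod_range_succ]
    ring

lemma K_eq_P (ν : ℝ) (hν : Real.Gamma ν ≠ 0) (hj : ∀ j : ℕ, ν + (j:ℝ) ≠ 0) (n : ℕ) :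
    risingFac ((n:ℝ)+1) (ν-1) / Real.Gamma ν = P n ν := by
  unfold risingFac P
  have h1 : (n:ℝ)+1+(ν-1) = ν + n := by ring
  rw [h1, Real.Gamma_nat_eq_factorial, Gamma_prod ν hj n]
  have h2 : (n.factorial : ℝ) ≠ 0 := by positivity
  field_simp

end TaylorAux

open TaylorAux

/-- Estimate of the remainder of the discrete backward fractional Taylor formula. -/
theorem discrete_nabla_fractional_taylor_remainder_bound
    (f : ℤ → ℝ) (a : ℤ) (μ : ℝ) (hμ : 0 < μ) (hμint : ∀ n : ℤ, μ ≠ n)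
    (m : ℕ) (hm : m = ⌈μ⌉₊) (hm1 : (m : ℝ) - 1 < μ) (hm2 : μ < m)
    (t : ℤ) (ht : a + m ≤ t) :
    |f t - ∑ k ∈ Finset.range m,
        risingFac ((t - a : ℤ) : ℝ) k / (Nat.factorial k) * nabla^[k] f a| ≤
      risingFac ((t - a : ℤ) : ℝ) μ / Real.Gamma (μ + 1) *
        sSup ((fun τ : ℤ => |caputoNabla μ (a + 1) f τ|) '' Set.Icc (a + 1) t) := by
  have hm0 : 1 ≤ m := by
    rcases Nat.eq_zero_or_pos m with h | h
    · exfalso; rw [h] at hm2; norm_num at hm2; linarith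
    · exact h
  have hta : a + 1 ≤ t := by omega
  have hΓμ : Real.Gamma μ ≠ 0 := (Real.Gamma_pos_of_pos hμ).ne'
  have hjμ : ∀ j : ℕ, μ + (j:ℝ) ≠ 0 := fun j => by positivity
  have hσpos : 0 < (m:ℝ) - μ := by linarith
  have hΓσ : Real.Gamma ((m:ℝ)-μ) ≠ 0 := (Real.Gamma_pos_of_pos hσpos).ne'
  have hjσ : ∀ j : ℕ, (m:ℝ)-μ + (j:ℝ) ≠ 0 := fun j => by positivity
  have hΓμ1 : Real.Gamma (μ+1) ≠ 0 := (Real.Gamma_pos_of_pos (by linarith)).ne'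
  have hjμ1 : ∀ j : ℕ, μ+1 + (j:ℝ) ≠ 0 := fun j => by positivity
  have hN1 : (((t-(a+1)).toNat : ℝ)) + 1 = ((t-a : ℤ) : ℝ) := by
    have h0 : ((t-(a+1)).toNat : ℤ) = t-(a+1) := Int.toNat_of_nonneg (by omega)
    have h1 : (((t-(a+1)).toNat : ℕ) : ℝ) = ((t-(a+1) : ℤ) : ℝ) := by exact_mod_cast h0
    push_cast at h1 ⊢
    linarith
  -- coefficient conversions
  have hcoefk : ∀ k : ℕ, risingFac ((t-a:ℤ):ℝ) (k:ℝ) / ((k.factorial : ℕ):ℝ)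
      = P ((t-(a+1)).toNat) ((k:ℝ)+1) := by
    intro k
    have hν : Real.Gamma ((k:ℝ)+1) ≠ 0 := by rw [Real.Gamma_nat_eq_factorial]; positivity
    have hj : ∀ j : ℕ, (k:ℝ)+1 + (j:ℝ) ≠ 0 := fun j => by positivity
    have h := K_eq_P ((k:ℝ)+1) hν hj ((t-(a+1)).toNat)
    rw [show (k:ℝ)+1-1 = (k:ℝ) from by ring, hN1, Real.Gamma_nat_eq_factorial] at h
    exact h
  have hcoefμ : risingFac ((t-a:ℤ):ℝ) μ / Real.Gamma (μ+1) = P ((t-(a+1)).toNat) (μ+1) := by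
    have h := K_eq_P (μ+1) hΓμ1 hjμ1 ((t-(a+1)).toNat)
    rw [show μ+1-1 = μ from by ring, hN1] at h
    exact h
  -- fracSum in P form
  have hfrac : ∀ (ν : ℝ), Real.Gamma ν ≠ 0 → (∀ j : ℕ, ν + (j:ℝ) ≠ 0) →
      ∀ (g : ℤ → ℝ) (B τ : ℤ), fracSum ν B g τ = ∑ s ∈ Icc B τ, P ((τ-s).toNat) ν * g s := by
    intro ν hν hj g B τ
    unfold fracSum
    apply sum_congr rfl
    intro s hs
    simp only [mem_Icc] at hs
    have h0 : ((τ-s).toNat : ℤ) = τ - s := Int.toNat_of_nonneg (by omega)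
    have hk : ((τ-s+1 : ℤ):ℝ) = (((τ-s).toNat : ℝ)) + 1 := by
      have h1 : (((τ-s).toNat : ℕ) : ℝ) = ((τ-s : ℤ) : ℝ) := by exact_mod_cast h0
      push_cast at h1 ⊢
      linarith
    rw [hk, K_eq_P ν hν hj]
  have hcap : ∀ τ : ℤ, caputoNabla μ (a+1) f τ
      = ∑ r ∈ Icc (a+1) τ, P ((τ-r).toNat) ((m:ℝ)-μ) * (nabla^[m] f) r := by
    intro τ
    simp only [caputoNabla, ← hm]
    exact hfrac ((m:ℝ)-μ) hΓσ hjσ _ _ τ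
  -- the key identity: remainder = fractional sum of the Caputo difference
  have hE : f t - ∑ k ∈ Finset.range m,
        risingFac ((t - a : ℤ) : ℝ) k / (Nat.factorial k) * nabla^[k] f a
      = ∑ s ∈ Icc (a+1) t, P ((t-s).toNat) μ * caputoNabla μ (a+1) f s := by
    have e1 : ∑ k ∈ Finset.range m,
          risingFac ((t - a : ℤ) : ℝ) k / (Nat.factorial k) * nabla^[k] f a
        = ∑ k ∈ range m, P ((t-(a+1)).toNat) ((k:ℝ)+1) * (nabla^[k] f) a := by
      apply sum_congr rfl
      intro k _
      rw [hcoefk k]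
    rw [e1, ← taylorP f a m hm0 t hta,
        show (m:ℝ) = μ + ((m:ℝ)-μ) from by ring,
        ← convP (a+1) t μ ((m:ℝ)-μ) (nabla^[m] f)]
    apply sum_congr rfl
    intro s _
    rw [hcap s]
  -- bound the sum
  set M := sSup ((fun τ : ℤ => |caputoNabla μ (a + 1) f τ|) '' Set.Icc (a + 1) t) with hMdef
  have hbdd : BddAbove ((fun τ : ℤ => |caputoNabla μ (a + 1) f τ|) '' Set.Icc (a + 1) t) :=
    ((Set.finite_Icc _ _).image _).bddAbove
  have hle : ∀ s ∈ Icc (a+1) t, |caputoNabla μ (a+1) f s| ≤ M := by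
    intro s hs
    simp only [mem_Icc] at hs
    exact le_csSup hbdd ⟨s, Set.mem_Icc.mpr hs, rfl⟩
  have hPpos : ∀ s : ℤ, (0:ℝ) ≤ P ((t-s).toNat) μ := fun s => P_nonneg _ hμ
  calc |f t - ∑ k ∈ Finset.range m,
        risingFac ((t - a : ℤ) : ℝ) k / (Nat.factorial k) * nabla^[k] f a|
      = |∑ s ∈ Icc (a+1) t, P ((t-s).toNat) μ * caputoNabla μ (a+1) f s| := by rw [hE]
    _ ≤ ∑ s ∈ Icc (a+1) t, |P ((t-s).toNat) μ * caputoNabla μ (a+1) f s| :=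
        abs_sum_le_sum_abs _ _
    _ ≤ ∑ s ∈ Icc (a+1) t, P ((t-s).toNat) μ * M := by
        apply sum_le_sum
        intro s hs
        rw [abs_mul, abs_of_nonneg (hPpos s)]
        exact mul_le_mul_of_nonneg_left (hle s hs) (hPpos s)
    _ = P ((t-(a+1)).toNat) (μ+1) * M := by rw [← sum_mul, sum_P_Icc (a+1) t hta]
    _ = risingFac ((t - a : ℤ) : ℝ) μ / Real.Gamma (μ + 1) * M := by rw [hcoefμ]
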